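/- arXiv:1403.5367 — 2 statements merged into one kernel-verified Lean document; each statement's English description precedes it below -/
import Mathlib

section
/- Let 0 < μ < π, let S = {z ∈ ℂ \ {0} : |arg z| < μ} be the open sector, and let g : S → ℂ be holomorphic with |g(z)| ≤ C·min(|z|^ε, |z|^{-ε}) for some constants C, ε > 0. Then for every z ∈ S the integral F(z) = ∫₀^∞ g(t z) dt/t converges absolutely, and F is constant on S, equal to ∫₀^∞ g(t) dt/t. -/
open MeasureTheory Set Complex Filter Topology
open scoped Interval

/-- `exp (-ε |x|)` is integrable on `ℝ`. -/
lemma stmt7_integrable_exp_neg_abs {ε : ℝ} (hε : 0 < ε) :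
    Integrable (fun x : ℝ => Real.exp (-ε * |x|)) := by
  have h1 : IntegrableOn (fun x : ℝ => Real.exp (-ε * |x|)) (Ici 0) := by
    rw [integrableOn_Ici_iff_integrableOn_Ioi]
    exact (exp_neg_integrableOn_Ioi 0 hε).congr_fun
      (fun x hx => by rw [abs_of_pos hx]) measurableSet_Ioi
  have h2 : IntegrableOn (fun x : ℝ => Real.exp (-ε * |x|)) (Iic 0) := by
    have h3 := ((integrable_indicator_iff measurableSet_Ici).2 h1).comp_neg
    have h4 : (fun x : ℝ => Set.indicator (Ici (0:ℝ))
        (fun x : ℝ => Real.exp (-ε * |x|)) (-x))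
        = Set.indicator (Iic (0:ℝ)) (fun x : ℝ => Real.exp (-ε * |x|)) := by
      funext x
      by_cases hx : x ≤ 0
      · rw [Set.indicator_of_mem (by simpa using hx),
          Set.indicator_of_mem (by simpa using hx), abs_neg]
      · rw [Set.indicator_of_notMem (by simpa using hx),
          Set.indicator_of_notMem (by simpa using hx)]
    rw [h4] at h3
    exact (integrable_indicator_iff measurableSet_Iic).1 h3
  have := h2.union h1
  rwa [Iic_union_Ici, integrableOn_univ] at this

/-- If `g` is holomorphic on the open sector `S` of half-angle `μ` with polynomial
decay at `0` and `∞`, then for every `z ∈ S` the integral `∫₀^∞ g(tz) dt/t`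
converges absolutely and its value is independent of `z`, namely `∫₀^∞ g(t) dt/t`. -/
theorem stmt7 (μ : ℝ) (hμ0 : 0 < μ) (hμπ : μ < Real.pi)
    (g : ℂ → ℂ)
    (hg : DifferentiableOn ℂ g {z : ℂ | z ≠ 0 ∧ |z.arg| < μ})
    (C ε : ℝ) (hC : 0 < C) (hε : 0 < ε)
    (hbd : ∀ z ∈ {z : ℂ | z ≠ 0 ∧ |z.arg| < μ},
      ‖g z‖ ≤ C * min (‖z‖ ^ ε) (‖z‖ ^ (-ε))) :
    ∀ z ∈ {z : ℂ | z ≠ 0 ∧ |z.arg| < μ},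
      MeasureTheory.IntegrableOn (fun t : ℝ => g ((t : ℂ) * z) / (t : ℂ)) (Set.Ioi 0) ∧
        ∫ t in Set.Ioi (0 : ℝ), g ((t : ℂ) * z) / (t : ℂ)
          = ∫ t in Set.Ioi (0 : ℝ), g (t : ℂ) / (t : ℂ) := by
  set S : Set ℂ := {z : ℂ | z ≠ 0 ∧ |z.arg| < μ} with hS
  set G : ℂ → ℂ := fun w => g (Complex.exp w) with hG
  -- arg of exp
  have harg : ∀ w : ℂ, |w.im| < Real.pi → (Complex.exp w).arg = w.im := by
    intro w hw
    have h1 : Complex.exp w = (Real.exp w.re : ℂ) * Complex.exp ((w.im : ℂ) * I) := by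
      rw [Complex.ofReal_exp, ← Complex.exp_add, Complex.re_add_im]
    rw [h1, Complex.arg_real_mul _ (Real.exp_pos _), Complex.exp_mul_I,
      Complex.arg_cos_add_sin_mul_I ⟨neg_lt_of_abs_lt hw, (le_abs_self _).trans hw.le⟩]
  have hmem : ∀ w : ℂ, |w.im| < μ → Complex.exp w ∈ S := by
    intro w hw
    exact ⟨Complex.exp_ne_zero w, by rw [harg w (hw.trans hμπ)]; exact hw⟩
  -- the exponential bound for G
  have hminexp : ∀ x : ℝ, min (Real.exp x ^ ε) (Real.exp x ^ (-ε)) = Real.exp (-ε * |x|) := by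
    intro x
    rw [Real.rpow_def_of_pos (Real.exp_pos x), Real.rpow_def_of_pos (Real.exp_pos x),
      Real.log_exp, ← Real.exp_monotone.map_min]
    congr 1
    rcases le_total 0 x with h | h
    · rw [min_eq_right (by nlinarith), _root_.abs_of_nonneg h]; ring
    · rw [min_eq_left (by nlinarith), _root_.abs_of_nonpos h]; ring
  have hGbd : ∀ w : ℂ, |w.im| < μ → ‖G w‖ ≤ C * Real.exp (-ε * |w.re|) := by
    intro w hw
    have := hbd _ (hmem w hw)
    rwa [Complex.norm_exp, hminexp] at this
  -- continuity and line integrability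
  have hGc : ∀ y : ℝ, |y| < μ → Continuous (fun x : ℝ => G ((x : ℂ) + (y : ℂ) * I)) := by
    intro y hy
    exact hg.continuousOn.comp_continuous
      (Complex.continuous_exp.comp (by continuity)) (fun x => hmem _ (by simp [hy]))
  have hGint : ∀ y : ℝ, |y| < μ → Integrable (fun x : ℝ => G ((x : ℂ) + (y : ℂ) * I)) := by
    intro y hy
    refine ((stmt7_integrable_exp_neg_abs hε).const_mul C).mono'
      ((hGc y hy).aestronglyMeasurable) ?_
    refine Filter.Eventually.of_forall (fun x => ?_)
    have := hGbd ((x : ℂ) + (y : ℂ) * I) (by simpa using hy)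
    simpa using this
  -- differentiability of G on the strip
  have hGd : DifferentiableOn ℂ G {w : ℂ | |w.im| < μ} :=
    hg.comp (Complex.differentiable_exp.differentiableOn) (fun w hw => hmem w hw)
  -- membership helper
  have habs : ∀ a b : ℝ, a ∈ uIcc 0 b → |a| ≤ |b| := by
    intro a b h
    rcases Set.mem_uIcc.mp h with ⟨h1, h2⟩ | ⟨h1, h2⟩
    · exact abs_le.2 ⟨by linarith [neg_abs_le b, abs_nonneg b], h2.trans (le_abs_self b)⟩
    · exact abs_le.2 ⟨(neg_abs_le b).trans h1, by linarith [le_abs_self b, abs_nonneg b]⟩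
  -- the contour shift
  have hshift : ∀ y : ℝ, |y| < μ →
      (∫ x : ℝ, G ((x : ℂ) + (y : ℂ) * I)) = ∫ x : ℝ, G (x : ℂ) := by
    intro y hy
    -- vertical bound
    have hvert : ∀ a : ℝ, ‖∫ s in (0:ℝ)..y, G ((a : ℂ) + (s : ℂ) * I)‖
        ≤ C * Real.exp (-ε * |a|) * |y - 0| := by
      intro a
      refine intervalIntegral.norm_integral_le_of_norm_le_const (fun s hs => ?_)
      have hsy : |s| ≤ |y| := habs s y (uIoc_subset_uIcc hs)
      have := hGbd ((a : ℂ) + (s : ℂ) * I) (by simpa using hsy.trans_lt hy)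
      simpa using this
    set I₁ := fun T : ℝ => ∫ x in -T..T, G ((x : ℂ) + (y : ℂ) * I) with hI₁
    set I₂ := fun T : ℝ => ∫ x in -T..T, G (x : ℂ) with hI₂
    set A := fun T : ℝ => ∫ s in (0:ℝ)..y, G ((T : ℂ) + (s : ℂ) * I) with hA
    set B := fun T : ℝ => ∫ s in (0:ℝ)..y, G (-(T : ℂ) + (s : ℂ) * I) with hB
    have key : ∀ T : ℝ, I₂ T - I₁ T + I • A T - I • B T = 0 := by
      intro T
      have hsub : ([[((-T:ℝ):ℂ).re, (((T:ℝ):ℂ) + (y:ℂ) * I).re]] ×ℂ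
          [[((-T:ℝ):ℂ).im, (((T:ℝ):ℂ) + (y:ℂ) * I).im]]) ⊆ {w : ℂ | |w.im| < μ} := by
        intro w hw
        have h2 := hw.2
        simp only [Complex.ofReal_im, Complex.add_im, Complex.mul_im, Complex.I_im,
          Complex.ofReal_re, Complex.I_re, mul_zero, mul_one, zero_add, zero_mul,
          add_zero, Complex.ofReal_neg, Complex.neg_im, neg_zero] at h2
        exact (habs w.im y (by simpa using h2)).trans_lt hy
      have h := Complex.integral_boundary_rect_eq_zero_of_differentiableOn G
        ((-T:ℝ):ℂ) (((T:ℝ):ℂ) + (y:ℂ) * I) (hGd.mono hsub)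
      simp only [Complex.ofReal_re, Complex.ofReal_im, Complex.add_re, Complex.add_im,
        Complex.mul_re, Complex.mul_im, Complex.I_re, Complex.I_im, Complex.ofReal_neg,
        Complex.neg_re, Complex.neg_im, mul_zero, mul_one, zero_mul, sub_zero, zero_add,
        add_zero, neg_zero, neg_neg, Complex.ofReal_zero] at h
      exact h
    have hlim1 : Tendsto I₁ atTop (𝓝 (∫ x : ℝ, G ((x : ℂ) + (y : ℂ) * I))) :=
      intervalIntegral_tendsto_integral (hGint y hy) tendsto_neg_atTop_atBot tendsto_id
    have hlim2 : Tendsto I₂ atTop (𝓝 (∫ x : ℝ, G (x : ℂ))) := by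
      have h0 : Integrable (fun x : ℝ => G (x : ℂ)) := by
        have := hGint 0 (by simpa using hμ0)
        simpa using this
      exact intervalIntegral_tendsto_integral h0 tendsto_neg_atTop_atBot tendsto_id
    -- vertical integrals tend to zero
    have hexp0 : Tendsto (fun T : ℝ => C * Real.exp (-ε * T) * |y - 0|) atTop (𝓝 0) := by
      have h2 := (Real.tendsto_exp_atBot.comp
        (tendsto_id.const_mul_atTop_of_neg (neg_lt_zero.2 hε))).const_mul C
      simpa using h2.mul_const |y - 0|
    have hA0 : Tendsto A atTop (𝓝 0) := by
      refine squeeze_zero_norm' ?_ hexp0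
      filter_upwards [eventually_ge_atTop (0:ℝ)] with T hT
      have := hvert T
      rwa [_root_.abs_of_nonneg hT] at this
    have hB0 : Tendsto B atTop (𝓝 0) := by
      refine squeeze_zero_norm' ?_ hexp0
      filter_upwards [eventually_ge_atTop (0:ℝ)] with T hT
      have h := hvert (-T)
      rw [abs_neg, _root_.abs_of_nonneg hT] at h
      first
      | exact h
      | simpa using h
      | (convert h using 3 <;> push_cast <;> ring)
    have hI₁eq : ∀ T, I₁ T = I₂ T + I • A T - I • B T := by
      intro T
      have h := key T
      simp only [smul_eq_mul] at h ⊢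
      linear_combination -h
    have hfinal : Tendsto I₁ atTop
        (𝓝 ((∫ x : ℝ, G (x : ℂ)) + I • (0:ℂ) - I • (0:ℂ))) := by
      rw [funext hI₁eq]
      exact (hlim2.add (hA0.const_smul I)).sub (hB0.const_smul I)
    simp only [smul_zero, add_zero, sub_zero] at hfinal
    exact tendsto_nhds_unique hlim1 hfinal
  -- change of variables: from Ioi 0 to the line
  have hmain : ∀ z ∈ S,
      IntegrableOn (fun t : ℝ => g ((t : ℂ) * z) / (t : ℂ)) (Ioi 0) ∧
      (∫ t in Ioi (0:ℝ), g ((t : ℂ) * z) / (t : ℂ)) = ∫ x : ℝ, G (x : ℂ) := by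
    rintro z ⟨hz0, hzarg⟩
    have hr : 0 < ‖z‖ := norm_pos_iff.mpr hz0
    have hzr : ∀ x : ℝ, ((Real.exp x : ℝ) : ℂ) * z
        = Complex.exp ((x : ℂ) + (Real.log (‖z‖) : ℂ) + (z.arg : ℂ) * I) := by
      intro x
      rw [Complex.exp_add, Complex.exp_add, ← Complex.ofReal_exp, ← Complex.ofReal_exp,
        Real.exp_log hr]
      nth_rewrite 1 [← Complex.norm_mul_exp_arg_mul_I z]
      ring
    have hderiv : ∀ x ∈ (univ : Set ℝ), HasDerivWithinAt Real.exp (Real.exp x) univ x :=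
      fun x _ => (Real.hasDerivAt_exp x).hasDerivWithinAt
    have hinj : InjOn Real.exp univ := Real.exp_injective.injOn
    have himg : Real.exp '' univ = Ioi (0:ℝ) := by rw [image_univ, Real.range_exp]
    have hfun : (fun x : ℝ => |Real.exp x| • (g (((Real.exp x : ℝ) : ℂ) * z) / ((Real.exp x : ℝ) : ℂ)))
        = fun x : ℝ => (fun x' : ℝ => G ((x' : ℂ) + (z.arg : ℂ) * I))
            (x + Real.log (‖z‖)) := by
      funext x
      have hne : ((Real.exp x : ℝ) : ℂ) ≠ 0 := by
        simpa using Real.exp_ne_zero x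
      rw [_root_.abs_of_pos (Real.exp_pos x), Complex.real_smul, mul_div_cancel₀ _ hne, hzr x]
      simp only [hG]
      congr 2
      push_cast
      ring
    constructor
    · rw [← himg, integrableOn_image_iff_integrableOn_abs_deriv_smul MeasurableSet.univ
        hderiv hinj, integrableOn_univ, hfun]
      exact (hGint z.arg hzarg).comp_add_right _
    · rw [← himg, integral_image_eq_integral_abs_deriv_smul MeasurableSet.univ hderiv hinj,
        setIntegral_univ, hfun,
        integral_add_right_eq_self (fun x' : ℝ => G ((x' : ℂ) + (z.arg : ℂ) * I))
          (Real.log (‖z‖))]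
      exact hshift z.arg hzarg
  intro z hz
  refine ⟨(hmain z hz).1, ?_⟩
  have h1 : (1 : ℂ) ∈ S := ⟨one_ne_zero, by simp [Complex.arg_one, hμ0]⟩
  have h2 := (hmain 1 h1).2
  simp only [mul_one] at h2
  rw [(hmain z hz).2, ← h2]
end

section
/- Let X be a reflexive Banach space and A a closed, densely defined linear operator in X such that for every real t ≠ 0 the operator I + i t A is invertible with sup_{t ≠ 0} ‖(I + i t A)^{-1}‖ < ∞. Then X decomposes as the topological direct sum X = ker(A) ⊕ closure(ran(A)). -/
open Filter Topology

lemma aux_clusterPt_eq_of_tendsto {α : Type*} {F : Filter α} [F.NeBot] {u : α → ℂ} {c d : ℂ}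
    (hc : MapClusterPt c F u) (hd : Tendsto u F (𝓝 d)) : c = d :=
  t2_iff_nhds.mp inferInstance (hc.clusterPt.mono hd)

lemma aux_mem_closed_submodule_of_dual {Y : Type*} [NormedAddCommGroup Y] [NormedSpace ℂ Y]
    (S : Submodule ℂ Y) (hS : IsClosed (S : Set Y)) {y : Y}
    (h : ∀ g : Y →L[ℂ] ℂ, (∀ s ∈ S, g s = 0) → g y = 0) : y ∈ S := by
  by_contra hy
  obtain ⟨l, u, hlS, huy⟩ := geometric_hahn_banach_closed_point
    ((S.restrictScalars ℝ).convex) hS hy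
  have hl0 : ∀ s ∈ S, l s = 0 := by
    intro s hs
    by_contra hls
    have hmem : ((u + 1) / l s) • s ∈ S := (S.restrictScalars ℝ).smul_mem _ hs
    have := hlS _ hmem
    rw [map_smul, smul_eq_mul, div_mul_cancel₀ _ hls] at this
    linarith
  have hu0 : (0:ℝ) < u := by simpa using hlS 0 S.zero_mem
  set g : Y →L[ℂ] ℂ := StrongDual.extendRCLike (𝕜 := ℂ) l with hgdef
  have hgapp : ∀ z : Y, g z = (l z : ℂ) - Complex.I * (l (Complex.I • z) : ℂ) := fun z => rfl
  have hgS : ∀ s ∈ S, g s = 0 := by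
    intro s hs
    rw [hgapp, hl0 s hs, hl0 _ (S.smul_mem Complex.I hs)]
    simp
  have hgy := h g hgS
  have hre : (g y).re = l y := by
    rw [hgapp]; simp
  rw [hgy] at hre
  simp at hre
  linarith

set_option maxHeartbeats 2000000 in
/-- Let `X` be a reflexive Banach space (the canonical embedding into the double dual
is surjective) and `A` a closed, densely defined operator in `X` such that `I + itA`
is invertible for every real `t ≠ 0` with a uniform bound on the inverses. Then `X`
decomposes as the topological direct sum `X = ker A ⊕ closure (ran A)`, witnessed by
a bounded projection onto `ker A` vanishing on `closure (ran A)`. -/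
theorem stmt17 {X : Type*} [NormedAddCommGroup X] [NormedSpace ℂ X] [CompleteSpace X]
    (hrefl : Function.Surjective (NormedSpace.inclusionInDoubleDual ℂ X))
    (A : X →ₗ.[ℂ] X)
    (hclosed : IsClosed (A.graph : Set (X × X)))
    (hdense : Dense (A.domain : Set X))
    (Cres : ℝ)
    (hres : ∀ t : ℝ, t ≠ 0 → ∃ R : X →L[ℂ] X, ‖R‖ ≤ Cres ∧
      (∀ x : X, ∃ h : R x ∈ A.domain, R x + (Complex.I * (t : ℂ)) • A ⟨R x, h⟩ = x) ∧
      (∀ y : A.domain, R ((y : X) + (Complex.I * (t : ℂ)) • A y) = y)) :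
    ∃ P : X →L[ℂ] X,
      (∀ x, P (P x) = P x) ∧
      (∀ x : X, ∃ h : P x ∈ A.domain, A ⟨P x, h⟩ = 0) ∧
      (∀ x : X, (∃ h : x ∈ A.domain, A ⟨x, h⟩ = 0) → P x = x) ∧
      (∀ x ∈ closure (Set.range fun y : A.domain => A y), P x = 0) ∧
      (∀ x : X, x - P x ∈ closure (Set.range fun y : A.domain => A y)) := by
  classical
  obtain ⟨R1, hR1norm, -, -⟩ := hres 1 one_ne_zero
  have hC0 : (0:ℝ) ≤ Cres := (norm_nonneg R1).trans hR1norm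
  -- total resolvent function
  have hres' : ∀ t : ℝ, ∃ R : X →L[ℂ] X, t ≠ 0 → ‖R‖ ≤ Cres ∧
      (∀ x : X, ∃ h : R x ∈ A.domain, R x + (Complex.I * (t:ℂ)) • A ⟨R x, h⟩ = x) ∧
      (∀ y : A.domain, R ((y:X) + (Complex.I * (t:ℂ)) • A y) = y) := by
    intro t
    by_cases ht : t = 0
    · exact ⟨0, fun h => absurd ht h⟩
    · obtain ⟨R, h1, h2, h3⟩ := hres t ht
      exact ⟨R, fun _ => ⟨h1, h2, h3⟩⟩
  choose R hR using hres'
  set S : Submodule ℂ X := (LinearMap.range A.toFun).topologicalClosure with hSdef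
  have hSset : (S : Set X) = closure (Set.range fun y : A.domain => A y) := by
    rw [hSdef, Submodule.topologicalClosure_coe, LinearMap.coe_range]
    rfl
  have hSclosed : IsClosed (S : Set X) := (LinearMap.range A.toFun).isClosed_topologicalClosure
  have hranS : ∀ y : A.domain, A y ∈ S := fun y =>
    Submodule.le_topologicalClosure _ (LinearMap.mem_range_self _ y)
  -- (F1) resolvent fixes kernel
  have hFker : ∀ t : ℝ, t ≠ 0 → ∀ x : X, ∀ hx : x ∈ A.domain, A ⟨x, hx⟩ = 0 → R t x = x := by
    intro t ht x hx hAx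
    have h3 := (hR t ht).2.2 ⟨x, hx⟩
    simpa [hAx] using h3
  -- resolvent bound
  have hRnorm : ∀ t : ℝ, t ≠ 0 → ∀ z : X, ‖R t z‖ ≤ Cres * ‖z‖ := fun t ht z =>
    ((R t).le_opNorm z).trans (mul_le_mul_of_nonneg_right (hR t ht).1 (norm_nonneg z))
  have hnormIt : ∀ t : ℝ, ‖Complex.I * (t:ℂ)‖ = |t| := by
    intro t
    rw [norm_mul, Complex.norm_I, one_mul, Complex.norm_real, Real.norm_eq_abs]
  -- (F2) R t (A z) small
  have hFran : ∀ t : ℝ, t ≠ 0 → ∀ z : A.domain,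
      ‖R t (A z)‖ ≤ |t|⁻¹ * ((1 + Cres) * ‖(z:X)‖) := by
    intro t ht z
    have h3 := (hR t ht).2.2 z
    have key : (Complex.I * (t:ℂ)) • R t (A z) = (z:X) - R t (z:X) := by
      have hmap : R t ((z:X) + (Complex.I * (t:ℂ)) • A z)
          = R t (z:X) + (Complex.I * (t:ℂ)) • R t (A z) := by
        rw [map_add, map_smul]
      rw [hmap] at h3
      exact eq_sub_of_add_eq' h3
    have hnorm : |t| * ‖R t (A z)‖ = ‖(z:X) - R t (z:X)‖ := by
      rw [← key, norm_smul, hnormIt]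
    have hb : ‖(z:X) - R t (z:X)‖ ≤ (1 + Cres) * ‖(z:X)‖ := by
      calc ‖(z:X) - R t (z:X)‖ ≤ ‖(z:X)‖ + ‖R t (z:X)‖ := norm_sub_le _ _
        _ ≤ ‖(z:X)‖ + Cres * ‖(z:X)‖ := by linarith [hRnorm t ht (z:X)]
        _ = (1 + Cres) * ‖(z:X)‖ := by ring
    rw [inv_mul_eq_div, le_div_iff₀ (abs_pos.mpr ht)]
    rw [mul_comm]
    rw [hnorm]
    exact hb
  -- (F4) value of A on R t x
  have hFdec : ∀ t : ℝ, t ≠ 0 → ∀ x : X, ∃ h : R t x ∈ A.domain,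
      A ⟨R t x, h⟩ = (Complex.I * (t:ℂ))⁻¹ • (x - R t x) := by
    intro t ht x
    obtain ⟨h, heq⟩ := (hR t ht).2.1 x
    have hIt : (Complex.I * (t:ℂ)) ≠ 0 :=
      mul_ne_zero Complex.I_ne_zero (by exact_mod_cast ht)
    refine ⟨h, ?_⟩
    have h2 : (Complex.I * (t:ℂ)) • A ⟨R t x, h⟩ = x - R t x := eq_sub_of_add_eq' heq
    rw [eq_inv_smul_iff₀ hIt]
    exact h2
  -- (F3) x - R t x ∈ S
  have hFmem : ∀ t : ℝ, t ≠ 0 → ∀ x : X, x - R t x ∈ S := by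
    intro t ht x
    obtain ⟨h, heq⟩ := (hR t ht).2.1 x
    have h2 : (Complex.I * (t:ℂ)) • A ⟨R t x, h⟩ = x - R t x := eq_sub_of_add_eq' heq
    rw [← h2]
    exact S.smul_mem _ (hranS ⟨R t x, h⟩)
  -- Part 1: kernel ∩ closure(range) = 0
  have hkerM : ∀ x : X, (∃ h : x ∈ A.domain, A ⟨x, h⟩ = 0) → x ∈ S → x = 0 := by
    rintro x ⟨hx, hAx⟩ hxS
    have hx0 : ∀ ε > 0, ‖x‖ ≤ Cres * ε := by
      intro ε hε
      obtain ⟨z, hz⟩ : ∃ z : A.domain, ‖x - A z‖ < ε := by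
        have hxc : x ∈ closure (Set.range fun y : A.domain => A y) := by
          rw [← hSset]; exact hxS
        rcases Metric.mem_closure_iff.mp hxc ε hε with ⟨w, hw, hdist⟩
        rcases hw with ⟨z, rfl⟩
        exact ⟨z, by rwa [dist_eq_norm] at hdist⟩
      refine le_of_forall_pos_le_add ?_
      intro δ hδ
      set B : ℝ := (1 + Cres) * ‖(z:X)‖ with hBdef
      have hB0 : 0 ≤ B := by positivity
      set t : ℝ := B / δ + 1 with htdef
      have ht0 : 0 < t := by positivity
      have htne : t ≠ 0 := ne_of_gt ht0
      have hsmall : |t|⁻¹ * B ≤ δ := by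
        rw [abs_of_pos ht0, inv_mul_eq_div, div_le_iff₀ ht0]
        have : δ * t = B + δ := by
          rw [htdef]; field_simp
        rw [this]
        linarith
      calc ‖x‖ = ‖R t x‖ := by rw [hFker t htne x hx hAx]
        _ = ‖R t (x - A z) + R t (A z)‖ := by rw [← map_add, sub_add_cancel]
        _ ≤ ‖R t (x - A z)‖ + ‖R t (A z)‖ := norm_add_le _ _
        _ ≤ Cres * ‖x - A z‖ + |t|⁻¹ * B := add_le_add (hRnorm t htne _) (hFran t htne z)
        _ ≤ Cres * ε + δ := add_le_add (mul_le_mul_of_nonneg_left hz.le hC0) hsmall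
    have hxle : ‖x‖ ≤ 0 := by
      refine le_of_forall_pos_le_add ?_
      intro δ hδ
      have h := hx0 (δ / (Cres + 1)) (div_pos hδ (by linarith))
      have h2 : Cres * (δ / (Cres + 1)) ≤ δ := by
        rw [mul_comm, div_mul_eq_mul_div, div_le_iff₀ (show (0:ℝ) < Cres + 1 by linarith)]
        nlinarith
      linarith
    have := norm_le_zero_iff.mp hxle
    exact this
  -- Part 2: existence of the kernel component via weak compactness
  have hexist : ∀ x : X, ∃ p : X,
      (∃ h : p ∈ A.domain, A ⟨p, h⟩ = 0) ∧ x - p ∈ S ∧ ‖p‖ ≤ Cres * ‖x‖ := by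
    intro x
    set u : ℝ → X := fun t => R t x with hu
    set ι := NormedSpace.inclusionInDoubleDual ℂ X with hι
    set v : ℝ → WeakDual ℂ (StrongDual ℂ X) :=
      fun t => StrongDual.toWeakDual (ι (u t)) with hv
    have hK : IsCompact (WeakDual.toStrongDual ⁻¹' Metric.closedBall 0 (Cres * ‖x‖) :
        Set (WeakDual ℂ (StrongDual ℂ X))) :=
      WeakDual.isCompact_closedBall (𝕜 := ℂ) 0 (Cres * ‖x‖)
    have hmem : ∀ᶠ t in atTop,
        v t ∈ (WeakDual.toStrongDual ⁻¹' Metric.closedBall 0 (Cres * ‖x‖) :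
          Set (WeakDual ℂ (StrongDual ℂ X))) := by
      filter_upwards [eventually_ge_atTop 1] with t ht
      have ht0 : t ≠ 0 := by intro h; rw [h] at ht; linarith
      simp only [Set.mem_preimage, Metric.mem_closedBall, dist_zero_right]
      have h1 : ‖WeakDual.toStrongDual (v t)‖ = ‖u t‖ :=
        (NormedSpace.inclusionInDoubleDualLi ℂ (E := X)).norm_map (u t)
      rw [show dist (WeakDual.toStrongDual (v t)) 0 = ‖u t‖ from (dist_zero_right (WeakDual.toStrongDual (v t))).trans h1]
      exact hRnorm t ht0 x
    haveI hneB : (Filter.map v atTop).NeBot := map_neBot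
    obtain ⟨Φ, hΦK, hΦ⟩ := hK.exists_clusterPt (le_principal_iff.mpr (mem_map.mpr hmem))
    obtain ⟨p, hp⟩ := hrefl (WeakDual.toStrongDual Φ)
    have hcl : ∀ f : StrongDual ℂ X, MapClusterPt (f p) atTop (fun t => f (u t)) := by
      intro f
      have hcont : ContinuousAt (fun φ : WeakDual ℂ (StrongDual ℂ X) => φ f) Φ :=
        (WeakDual.eval_continuous f).continuousAt
      have h3 := hΦ.map hcont tendsto_map
      rw [Filter.map_map] at h3
      have hΦf : Φ f = f p := by
        have := congrArg (fun ψ : StrongDual ℂ (StrongDual ℂ X) => ψ f) hp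
        exact this.symm
      rw [hΦf] at h3
      exact h3
    -- p is in the kernel: (p, 0) ∈ graph A
    have hkergraph : ((p, (0:X)) : X × X) ∈ A.graph := by
      apply aux_mem_closed_submodule_of_dual A.graph hclosed
      intro g hg
      set g1 : StrongDual ℂ X := g.comp (ContinuousLinearMap.inl ℂ X X) with hg1
      set g2 : StrongDual ℂ X := g.comp (ContinuousLinearMap.inr ℂ X X) with hg2
      have hgsplit : ∀ a b : X, g (a, b) = g1 a + g2 b := by
        intro a b
        have hab : ((a, b) : X × X) = ((a, 0) : X × X) + ((0, b) : X × X) := by simp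
        rw [hab, map_add]
        rfl
      have hev : ∀ᶠ t in atTop,
          g1 (u t) = - g2 ((Complex.I * (t:ℂ))⁻¹ • (x - u t)) := by
        filter_upwards [eventually_ge_atTop 1] with t ht
        have ht0 : t ≠ 0 := by intro h; rw [h] at ht; linarith
        obtain ⟨h, hA⟩ := hFdec t ht0 x
        have hmemg : ((u t, (Complex.I * (t:ℂ))⁻¹ • (x - u t)) : X × X) ∈ A.graph := by
          have hmg := A.mem_graph ⟨u t, h⟩
          rwa [hA] at hmg
        have h0 := hg _ hmemg
        rw [hgsplit] at h0
        exact eq_neg_of_add_eq_zero_left h0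
      have htendR : Tendsto (fun t : ℝ => - g2 ((Complex.I * (t:ℂ))⁻¹ • (x - u t)))
          atTop (𝓝 0) := by
        rw [← neg_zero]
        apply Filter.Tendsto.neg
        apply squeeze_zero_norm' (a := fun t : ℝ => ‖g2‖ * ((1 + Cres) * ‖x‖) * |t|⁻¹)
        · filter_upwards [eventually_ge_atTop 1] with t ht
          have ht0 : t ≠ 0 := by intro h; rw [h] at ht; linarith
          have hninv : ‖(Complex.I * (t:ℂ))⁻¹‖ = |t|⁻¹ := by
            rw [norm_inv, hnormIt]
          calc ‖g2 ((Complex.I * (t:ℂ))⁻¹ • (x - u t))‖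
              ≤ ‖g2‖ * ‖(Complex.I * (t:ℂ))⁻¹ • (x - u t)‖ := g2.le_opNorm _
            _ = ‖g2‖ * (|t|⁻¹ * ‖x - u t‖) := by rw [norm_smul, hninv]
            _ ≤ ‖g2‖ * (|t|⁻¹ * ((1 + Cres) * ‖x‖)) := by
                have hxu : ‖x - u t‖ ≤ (1 + Cres) * ‖x‖ := by
                  calc ‖x - u t‖ ≤ ‖x‖ + ‖u t‖ := norm_sub_le _ _
                    _ ≤ ‖x‖ + Cres * ‖x‖ := by linarith [hRnorm t ht0 x]
                    _ = (1 + Cres) * ‖x‖ := by ring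
                have h1 : (0:ℝ) ≤ |t|⁻¹ := by positivity
                have h2 : (0:ℝ) ≤ ‖g2‖ := norm_nonneg _
                exact mul_le_mul_of_nonneg_left (mul_le_mul_of_nonneg_left hxu h1) h2
            _ = ‖g2‖ * ((1 + Cres) * ‖x‖) * |t|⁻¹ := by ring
        · have hinv : Tendsto (fun t : ℝ => |t|⁻¹) atTop (𝓝 0) :=
            tendsto_inv_atTop_zero.comp tendsto_abs_atTop_atTop
          simpa using hinv.const_mul (‖g2‖ * ((1 + Cres) * ‖x‖))
      have hev' : (fun t : ℝ => g1 (u t)) =ᶠ[atTop]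
          (fun t : ℝ => - g2 ((Complex.I * (t:ℂ))⁻¹ • (x - u t))) := hev
      have htendL : Tendsto (fun t : ℝ => g1 (u t)) atTop (𝓝 0) :=
        htendR.congr' hev'.symm
      have hg1p : g1 p = 0 := aux_clusterPt_eq_of_tendsto (hcl g1) htendL
      rw [hgsplit, hg1p, map_zero, add_zero]
    obtain ⟨y, hy1, hy2⟩ := (A.mem_graph_iff).mp hkergraph
    have hy1' : (y : X) = p := hy1
    have hpdom : p ∈ A.domain := hy1' ▸ y.2
    have hpA : A ⟨p, hpdom⟩ = 0 := by
      have hye : (⟨p, hpdom⟩ : A.domain) = y := Subtype.ext hy1'.symm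
      rw [hye]
      exact hy2
    -- x - p ∈ S
    have hxpS : x - p ∈ S := by
      apply aux_mem_closed_submodule_of_dual S hSclosed
      intro g hgS
      have hev : ∀ᶠ t in atTop, g (u t) = g x := by
        filter_upwards [eventually_ge_atTop 1] with t ht
        have ht0 : t ≠ 0 := by intro h; rw [h] at ht; linarith
        have h0 := hgS _ (hFmem t ht0 x)
        rw [map_sub] at h0
        have := sub_eq_zero.mp h0
        exact this.symm
      have hev' : (fun t : ℝ => g (u t)) =ᶠ[atTop] (fun _ : ℝ => g x) := hev
      have htend : Tendsto (fun t : ℝ => g (u t)) atTop (𝓝 (g x)) :=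
        tendsto_const_nhds.congr' hev'.symm
      have hgp : g p = g x := aux_clusterPt_eq_of_tendsto (hcl g) htend
      rw [map_sub, hgp, sub_self]
    -- norm bound
    have hnormp : ‖p‖ ≤ Cres * ‖x‖ := by
      have h1 : ‖WeakDual.toStrongDual Φ‖ ≤ Cres * ‖x‖ := by
        exact (dist_zero_right (WeakDual.toStrongDual Φ)).symm.trans_le (Metric.mem_closedBall.mp hΦK)
      rw [← hp] at h1
      have h2 : ‖ι p‖ = ‖p‖ := (NormedSpace.inclusionInDoubleDualLi ℂ (E := X)).norm_map p
      rwa [h2] at h1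
    exact ⟨p, ⟨hpdom, hpA⟩, hxpS, hnormp⟩
  -- Part 3: assemble the projection
  choose p hpker hpM hpnorm using hexist
  have huniq : ∀ x q1 q2 : X, (∃ h : q1 ∈ A.domain, A ⟨q1, h⟩ = 0) →
      (∃ h : q2 ∈ A.domain, A ⟨q2, h⟩ = 0) → x - q1 ∈ S → x - q2 ∈ S → q1 = q2 := by
    rintro x q1 q2 ⟨h1, hA1⟩ ⟨h2, hA2⟩ hm1 hm2
    have hdom : q1 - q2 ∈ A.domain := A.domain.sub_mem h1 h2
    have hAz : A ⟨q1 - q2, hdom⟩ = 0 := by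
      have hsub : (⟨q1 - q2, hdom⟩ : A.domain) = ⟨q1, h1⟩ - ⟨q2, h2⟩ := rfl
      rw [hsub, A.map_sub, hA1, hA2, sub_zero]
    have hmem : q1 - q2 ∈ S := by
      have h3 := S.sub_mem hm2 hm1
      have h4 : (x - q2) - (x - q1) = q1 - q2 := by abel
      rwa [h4] at h3
    exact sub_eq_zero.mp (hkerM (q1 - q2) ⟨hdom, hAz⟩ hmem)
  have hker0 : ∃ h : (0:X) ∈ A.domain, A ⟨0, h⟩ = 0 := by
    refine ⟨A.domain.zero_mem, ?_⟩
    have h0 : (⟨0, A.domain.zero_mem⟩ : A.domain) = 0 := rfl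
    rw [h0, A.map_zero]
  have padd : ∀ x y : X, p (x + y) = p x + p y := by
    intro x y
    obtain ⟨hx1, hx2⟩ := hpker x
    obtain ⟨hy1, hy2⟩ := hpker y
    refine huniq (x + y) (p (x + y)) (p x + p y) (hpker _) ⟨A.domain.add_mem hx1 hy1, ?_⟩
      (hpM _) ?_
    · have hsub : (⟨p x + p y, A.domain.add_mem hx1 hy1⟩ : A.domain)
          = ⟨p x, hx1⟩ + ⟨p y, hy1⟩ := rfl
      rw [hsub, A.map_add, hx2, hy2, add_zero]
    · have h4 : (x + y) - (p x + p y) = (x - p x) + (y - p y) := by abel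
      rw [h4]
      exact S.add_mem (hpM x) (hpM y)
  have psmul : ∀ (c : ℂ) (x : X), p (c • x) = c • p x := by
    intro c x
    obtain ⟨hx1, hx2⟩ := hpker x
    refine huniq (c • x) (p (c • x)) (c • p x) (hpker _) ⟨A.domain.smul_mem c hx1, ?_⟩
      (hpM _) ?_
    · have hsub : (⟨c • p x, A.domain.smul_mem c hx1⟩ : A.domain) = c • ⟨p x, hx1⟩ := rfl
      rw [hsub, A.map_smul, hx2, smul_zero]
    · have h4 : c • x - c • p x = c • (x - p x) := by rw [smul_sub]
      rw [h4]
      exact S.smul_mem c (hpM x)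
  set Pl : X →ₗ[ℂ] X :=
    { toFun := p, map_add' := padd, map_smul' := psmul } with hPl
  set P : X →L[ℂ] X := Pl.mkContinuous Cres (fun x => hpnorm x) with hP
  have hPapp : ∀ x : X, P x = p x := fun x => rfl
  have hPfix : ∀ x : X, (∃ h : x ∈ A.domain, A ⟨x, h⟩ = 0) → P x = x := by
    intro x hx
    rw [hPapp]
    refine huniq x (p x) x (hpker x) hx (hpM x) ?_
    rw [sub_self]
    exact S.zero_mem
  refine ⟨P, ?_, ?_, hPfix, ?_, ?_⟩
  · intro x
    exact hPfix (P x) (by rw [hPapp]; exact hpker x)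
  · intro x
    rw [hPapp]
    exact hpker x
  · intro x hx
    rw [hPapp]
    have hxS : x ∈ S := by
      rw [← hSset] at hx
      exact hx
    refine huniq x (p x) 0 (hpker x) hker0 (hpM x) ?_
    rw [sub_zero]
    exact hxS
  · intro x
    rw [hPapp]
    have := hpM x
    rw [← hSset]
    exact this
end
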